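/- Let (X, 𝔠) be a space with characters. Then every connected component of the quasi-cubulation (the graph whose vertices are coherent selectors and whose edges join selectors differing on a single character) is a quasi-median graph, and the distance between two coherent selectors μ and ν in the quasi-cubulation equals the number of characters on which μ and ν disagree (in particular they lie in the same component iff they disagree on only finitely many characters). -/

import Mathlib

open SimpleGraph

variable {V : Type*}

/-- Triangle condition of weak modularity. -/
def TriangleCond (X : SimpleGraph V) : Prop :=
  ∀ o x y : V, X.Adj x y → X.dist o x = X.dist o y →
    ∃ w : V, X.Adj w x ∧ X.Adj w y ∧ X.dist o w + 1 = X.dist o x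

/-- Quadrangle condition of weak modularity. -/
def QuadCond (X : SimpleGraph V) : Prop :=
  ∀ o x y z : V, X.Adj z x → X.Adj z y → X.dist x y = 2 →
    X.dist o z = X.dist o x + 1 → X.dist o z = X.dist o y + 1 →
    ∃ w : V, X.Adj w x ∧ X.Adj w y ∧ X.dist o w + 2 = X.dist o z

/-- No induced copy of the complete bipartite graph `K_{2,3}`. -/
def NoInducedK23 (X : SimpleGraph V) : Prop :=
  ¬ ∃ a b x y z : V, a ≠ b ∧ x ≠ y ∧ y ≠ z ∧ x ≠ z ∧
    X.Adj a x ∧ X.Adj a y ∧ X.Adj a z ∧ X.Adj b x ∧ X.Adj b y ∧ X.Adj b z ∧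
    ¬ X.Adj a b ∧ ¬ X.Adj x y ∧ ¬ X.Adj y z ∧ ¬ X.Adj x z

/-- No induced copy of `K₄` minus an edge. -/
def NoInducedK4minus (X : SimpleGraph V) : Prop :=
  ¬ ∃ a b c d : V, X.Adj a b ∧ X.Adj a c ∧ X.Adj a d ∧ X.Adj b c ∧ X.Adj b d ∧
    c ≠ d ∧ ¬ X.Adj c d

/-- A quasi-median graph: a connected weakly modular graph with no induced
`K_{2,3}` and no induced `K₄⁻`. -/
def QuasiMedian (X : SimpleGraph V) : Prop :=
  X.Connected ∧ TriangleCond X ∧ QuadCond X ∧ NoInducedK23 X ∧ NoInducedK4minus X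

/-- `m` lies on a geodesic from `a` to `b`. -/
def InInterval (X : SimpleGraph V) (a m b : V) : Prop :=
  X.dist a m + X.dist m b = X.dist a b

/-- `m` is a median of the triple `a, b, c`. -/
def IsMedianOf (X : SimpleGraph V) (m a b c : V) : Prop :=
  InInterval X a m b ∧ InInterval X b m c ∧ InInterval X a m c

/-- A median graph: connected, and every triple of vertices has a unique median. -/
def MedianGraph (X : SimpleGraph V) : Prop :=
  X.Connected ∧ ∀ a b c : V, ∃! m : V, IsMedianOf X m a b c

/-- The elementary relation on edges generating hyperplanes: two edges of a common
triangle, or opposite edges of an induced 4-cycle. -/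
def EdgeRel (X : SimpleGraph V) (e f : Sym2 V) : Prop :=
  (∃ a b c : V, X.Adj a b ∧ X.Adj b c ∧ X.Adj a c ∧ e = s(a, b) ∧ f = s(b, c)) ∨
  (∃ a b c d : V, X.Adj a b ∧ X.Adj b c ∧ X.Adj c d ∧ X.Adj d a ∧
    a ≠ c ∧ ¬ X.Adj a c ∧ b ≠ d ∧ ¬ X.Adj b d ∧ e = s(a, b) ∧ f = s(c, d))

/-- A hyperplane: an equivalence class of edges under the reflexive-transitive
closure of `EdgeRel`. -/
def IsHyperplane (X : SimpleGraph V) (J : Set (Sym2 V)) : Prop :=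
  ∃ e ∈ X.edgeSet, J = {f | Relation.ReflTransGen (EdgeRel X) e f}

/-- The hyperplane `J` separates `x` and `y`. -/
def SeparatesPts (X : SimpleGraph V) (J : Set (Sym2 V)) (x y : V) : Prop :=
  ¬ (X.deleteEdges J).Reachable x y

/-- A sector delimited by `J`: a connected component of `X` minus the edges of `J`. -/
def IsSectorOf (X : SimpleGraph V) (J : Set (Sym2 V)) (S : Set V) : Prop :=
  ∃ v : V, S = {w | (X.deleteEdges J).Reachable v w}

/-- A gated subset of vertices. -/
def IsGated (X : SimpleGraph V) (Y : Set V) : Prop :=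
  Y.Nonempty ∧ ∀ x : V, ∃ y ∈ Y, ∀ z ∈ Y, X.dist x z = X.dist x y + X.dist y z

/-- The gated hull of a set of vertices. -/
def GatedHull (X : SimpleGraph V) (A : Set V) : Set V :=
  ⋂₀ {Y : Set V | IsGated X Y ∧ A ⊆ Y}

/-- A polytope: the gated hull of a non-empty finite set of vertices. -/
def IsPolytope (X : SimpleGraph V) (P : Set V) : Prop :=
  ∃ A : Finset V, A.Nonempty ∧ P = GatedHull X (A : Set V)

/-- `HypOf X Y`: the hyperplanes separating two vertices of `Y` (the hyperplanes
crossing `Y`). -/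
def HypOf (X : SimpleGraph V) (Y : Set V) : Set (Set (Sym2 V)) :=
  {J | IsHyperplane X J ∧ ∃ a ∈ Y, ∃ b ∈ Y, SeparatesPts X J a b}

/-- The hyperplanes separating `A` from `B` (placing them in two distinct sectors). -/
def SepHyp (X : SimpleGraph V) (A B : Set V) : Set (Set (Sym2 V)) :=
  {J | IsHyperplane X J ∧ ∃ S T : Set V, IsSectorOf X J S ∧ IsSectorOf X J T ∧
    S ≠ T ∧ A ⊆ S ∧ B ⊆ T}

/-- The covering relation for polytopes: `P ⊊ Q` with no polytope strictly between. -/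
def PolyCover (X : SimpleGraph V) (P Q : Set V) : Prop :=
  IsPolytope X P ∧ IsPolytope X Q ∧ P ⊂ Q ∧
    ¬ ∃ R : Set V, IsPolytope X R ∧ P ⊂ R ∧ R ⊂ Q

abbrev PolyVert (X : SimpleGraph V) := {P : Set V // IsPolytope X P}

/-- The graph of polytopes: the covering graph of the inclusion poset of polytopes. -/
def PolyGraph (X : SimpleGraph V) : SimpleGraph (PolyVert X) where
  Adj P Q := PolyCover X P.val Q.val ∨ PolyCover X Q.val P.val
  symm := by constructor; intro P Q h; exact h.symm
  loopless := by constructor; intro P h; rcases h with h | h <;> exact (ssubset_irrefl P.val) h.2.2.1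

/-- Two hyperplanes are transverse: there is an induced 4-cycle whose two pairs of
opposite edges belong respectively to the two hyperplanes. -/
def Transverse (X : SimpleGraph V) (J₁ J₂ : Set (Sym2 V)) : Prop :=
  ∃ a b c d : V, X.Adj a b ∧ X.Adj b c ∧ X.Adj c d ∧ X.Adj d a ∧
    a ≠ c ∧ ¬ X.Adj a c ∧ b ≠ d ∧ ¬ X.Adj b d ∧
    s(a, b) ∈ J₁ ∧ s(c, d) ∈ J₁ ∧ s(b, c) ∈ J₂ ∧ s(d, a) ∈ J₂

/-- A prism: a polytope whose crossing hyperplanes are pairwise transverse (this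
characterises the gated subgraphs decomposing as finite products of cliques). -/
def IsPrism (X : SimpleGraph V) (P : Set V) : Prop :=
  IsPolytope X P ∧ ∀ J₁ ∈ HypOf X P, ∀ J₂ ∈ HypOf X P, J₁ ≠ J₂ → Transverse X J₁ J₂

/-- The covering relation for prisms. -/
def PrismCover (X : SimpleGraph V) (P Q : Set V) : Prop :=
  IsPrism X P ∧ IsPrism X Q ∧ P ⊂ Q ∧
    ¬ ∃ R : Set V, IsPrism X R ∧ P ⊂ R ∧ R ⊂ Q

abbrev PrismVert (X : SimpleGraph V) := {P : Set V // IsPrism X P}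

/-- The graph of prisms. -/
def PrismGraph (X : SimpleGraph V) : SimpleGraph (PrismVert X) where
  Adj P Q := PrismCover X P.val Q.val ∨ PrismCover X Q.val P.val
  symm := by constructor; intro P Q h; exact h.symm
  loopless := by constructor; intro P h; rcases h with h | h <;> exact (ssubset_irrefl P.val) h.2.2.1

/-- A convex set of vertices: closed under taking points on geodesics. -/
def IsConvexSet (X : SimpleGraph V) (Y : Set V) : Prop :=
  ∀ a ∈ Y, ∀ b ∈ Y, ∀ m : V, InInterval X a m b → m ∈ Y

/-- The convex hull of a set of vertices. -/
def ConvHull (X : SimpleGraph V) (A : Set V) : Set V :=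
  ⋂₀ {Y : Set V | IsConvexSet X Y ∧ A ⊆ Y}

/-- The subgraph of `X` induced on `Y` (kept on the same vertex set). -/
def RestrictTo (X : SimpleGraph V) (Y : Set V) : SimpleGraph V where
  Adj a b := X.Adj a b ∧ a ∈ Y ∧ b ∈ Y
  symm := by constructor; intro a b h; exact ⟨h.1.symm, h.2.2, h.2.1⟩
  loopless := by constructor; intro a h; exact X.irrefl h.1

variable {X : Type*}

/-- A character on `X`: a partition of `X` into at least two non-empty clades. -/
def IsCharacter (C : Set (Set X)) : Prop :=
  (∀ c ∈ C, c.Nonempty) ∧ (∀ x : X, ∃! c : Set X, c ∈ C ∧ x ∈ c) ∧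
    ∃ c d : Set X, c ∈ C ∧ d ∈ C ∧ c ≠ d

/-- An extension of a clade `c` of the character `C`: the complement of another
clade of `C`. -/
def IsExtensionOf (C : Set (Set X)) (c E : Set X) : Prop :=
  ∃ d ∈ C, d ≠ c ∧ E = dᶜ

/-- A coherent selector: it chooses a clade in each character, and no two chosen
clades admit disjoint extensions. -/
def CoherentSel (𝔠 : Set (Set (Set X))) (σ : ↥𝔠 → Set X) : Prop :=
  (∀ C : ↥𝔠, σ C ∈ C.val) ∧
    ∀ (C D : ↥𝔠) (E F : Set X), IsExtensionOf C.val (σ C) E →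
      IsExtensionOf D.val (σ D) F → (E ∩ F).Nonempty

abbrev CohVert (𝔠 : Set (Set (Set X))) := {σ : ↥𝔠 → Set X // CoherentSel 𝔠 σ}

/-- The quasi-cubulation: vertices are the coherent selectors, and edges join two
selectors differing on exactly one character. -/
def QCGraph (𝔠 : Set (Set (Set X))) : SimpleGraph (CohVert 𝔠) where
  Adj σ τ := ∃! C : ↥𝔠, σ.val C ≠ τ.val C
  symm := by
    constructor
    rintro σ τ ⟨C, hC, hu⟩
    exact ⟨C, fun h => hC h.symm, fun D hD => hu D fun h => hD h.symm⟩
  loopless := by constructor; rintro σ ⟨C, hC, -⟩; exact hC rfl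

section QCaux

variable {𝔠 : Set (Set (Set X))}

open Classical in
noncomputable def qcFlip (σ : ↥𝔠 → Set X) (D : ↥𝔠) (c : Set X) : ↥𝔠 → Set X :=
  fun E => if E = D then c else σ E

lemma qcFlip_same (σ : ↥𝔠 → Set X) (D : ↥𝔠) (c : Set X) : qcFlip σ D c D = c := by
  simp [qcFlip]

lemma qcFlip_ne (σ : ↥𝔠 → Set X) (D : ↥𝔠) (c : Set X) {E : ↥𝔠} (h : E ≠ D) :
    qcFlip σ D c E = σ E := by simp [qcFlip, h]


/-- distinct clades are disjoint -/
lemma qc_disj (h𝔠 : ∀ C ∈ 𝔠, IsCharacter C) (C : ↥𝔠) {c d : Set X} (hc : c ∈ C.val) (hd : d ∈ C.val) (hne : c ≠ d)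
    {x : X} (hx : x ∈ c) : x ∉ d := by
  intro hx'
  obtain ⟨e, -, hu⟩ := (h𝔠 C.val C.prop).2.1 x
  exact hne ((hu c ⟨hc, hx⟩).trans (hu d ⟨hd, hx'⟩).symm)

lemma qc_clade_nonempty (h𝔠 : ∀ C ∈ 𝔠, IsCharacter C) (C : ↥𝔠) {c : Set X} (hc : c ∈ C.val) : c.Nonempty :=
  (h𝔠 C.val C.prop).1 c hc

/-- core flip-coherence lemma -/
lemma qc_coherent_flip (σ o : CohVert 𝔠) (D : ↥𝔠)
    (hσo : σ.val D ≠ o.val D)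
    (hblock : ∀ E : ↥𝔠, E ≠ D → o.val E ≠ σ.val E →
      ((σ.val D)ᶜ ∩ (o.val E)ᶜ).Nonempty) :
    CoherentSel 𝔠 (qcFlip σ.val D (o.val D)) := by
  constructor
  · intro C
    by_cases h : C = D
    · subst h; rw [qcFlip_same]; exact o.prop.1 C
    · rw [qcFlip_ne _ _ _ h]; exact σ.prop.1 C
  · have helper : ∀ (D' : ↥𝔠) (d e : Set X), d ∈ D.val → d ≠ o.val D →
        e ∈ D'.val → e ≠ qcFlip σ.val D (o.val D) D' → (dᶜ ∩ eᶜ).Nonempty := by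
      intro D' d e hd hdo he hew
      by_cases heo : e = o.val D'
      · -- e = o D'; then D' ≠ D
        have hD' : D' ≠ D := by
          intro h; subst h; rw [qcFlip_same] at hew; exact hew heo
        rw [qcFlip_ne _ _ _ hD'] at hew
        by_cases hdσ : d = σ.val D
        · have := hblock D' hD' (by rw [← heo]; exact hew)
          rw [hdσ, heo]; exact this
        · exact σ.prop.2 D D' dᶜ eᶜ ⟨d, hd, hdσ, rfl⟩
            ⟨e, he, by rw [heo]; intro h; exact hew (heo ▸ h), rfl⟩
      · exact o.prop.2 D D' dᶜ eᶜ ⟨d, hd, hdo, rfl⟩ ⟨e, he, heo, rfl⟩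
    rintro C' D' E F ⟨d, hd, hdw, rfl⟩ ⟨e, he, hew, rfl⟩
    by_cases hC : C' = D
    · subst hC; rw [qcFlip_same] at hdw
      exact helper D' d e hd hdw he hew
    · rw [qcFlip_ne _ _ _ hC] at hdw
      by_cases hD' : D' = D
      · subst hD'; rw [qcFlip_same] at hew
        rw [Set.inter_comm]
        exact helper C' e d he hew hd (by rw [qcFlip_ne _ _ _ hC]; exact hdw)
      · rw [qcFlip_ne _ _ _ hD'] at hew
        exact σ.prop.2 C' D' _ _ ⟨d, hd, hdw, rfl⟩ ⟨e, he, hew, rfl⟩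

/-- flip-coherence via a third selector -/
lemma qc_coherent_flip₃ (σ τ o : CohVert 𝔠) (D : ↥𝔠)
    (hσo : σ.val D ≠ o.val D) (hστ : σ.val D ≠ τ.val D)
    (h : ∀ E : ↥𝔠, E ≠ D → o.val E ≠ σ.val E → o.val E ≠ τ.val E) :
    CoherentSel 𝔠 (qcFlip σ.val D (o.val D)) := by
  refine qc_coherent_flip σ o D hσo (fun E hED hoσ => ?_)
  exact τ.prop.2 D E _ _ ⟨σ.val D, σ.prop.1 D, hστ, rfl⟩
    ⟨o.val E, o.prop.1 E, h E hED hoσ, rfl⟩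

end QCaux


section QCaux2
variable {𝔠 : Set (Set (Set X))}

lemma qc_two_cycle (h𝔠 : ∀ C ∈ 𝔠, IsCharacter C) (μ ν : CohVert 𝔠) (D E : ↥𝔠)
    (hD : μ.val D ≠ ν.val D) (hE : μ.val E ≠ ν.val E) (hne : D ≠ E)
    (h1 : (μ.val D)ᶜ ⊆ ν.val E) (h2 : (μ.val E)ᶜ ⊆ ν.val D) : False := by
  have hdisjD : ν.val D ⊆ (μ.val D)ᶜ := fun x hx =>
    fun hx' => qc_disj h𝔠 D (ν.prop.1 D) (μ.prop.1 D) (Ne.symm hD) hx hx'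
  have hdisjE : ν.val E ⊆ (μ.val E)ᶜ := fun x hx =>
    fun hx' => qc_disj h𝔠 E (ν.prop.1 E) (μ.prop.1 E) (Ne.symm hE) hx hx'
  -- chain of inclusions forces equalities
  have e1 : ν.val D = (μ.val D)ᶜ :=
    Set.Subset.antisymm hdisjD (h1.trans (hdisjE.trans h2))
  have e2 : ν.val E = (μ.val E)ᶜ :=
    Set.Subset.antisymm hdisjE (h2.trans (hdisjD.trans h1))
  have e3 : ν.val D = ν.val E := by
    apply Set.Subset.antisymm
    · rw [e1]; exact h1
    · rw [e2]; exact h2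
  have e4 : μ.val D = μ.val E := by
    have : (μ.val D)ᶜ = (μ.val E)ᶜ := by rw [← e1, ← e2, e3]
    exact compl_injective this
  -- every clade of D is μ D or ν D
  have key : ∀ (F : ↥𝔠), ν.val F = (μ.val F)ᶜ → ∀ c ∈ F.val, c = μ.val F ∨ c = ν.val F := by
    intro F hF c hc
    by_contra h
    push_neg at h
    obtain ⟨x, hx⟩ := qc_clade_nonempty h𝔠 F hc
    have h1' : x ∉ μ.val F := qc_disj h𝔠 F hc (μ.prop.1 F) h.1 hx
    have h2' : x ∉ ν.val F := qc_disj h𝔠 F hc (ν.prop.1 F) h.2 hx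
    rw [hF] at h2'
    exact h2' h1'
  apply hne
  apply Subtype.ext
  apply Set.eq_of_subset_of_subset
  · intro c hc
    rcases key D e1 c hc with h | h
    · rw [h, e4]; exact μ.prop.1 E
    · rw [h, e3]; exact ν.prop.1 E
  · intro c hc
    rcases key E e2 c hc with h | h
    · rw [h, ← e4]; exact μ.prop.1 D
    · rw [h, ← e3]; exact ν.prop.1 D

lemma qc_exists_unblocked (h𝔠 : ∀ C ∈ 𝔠, IsCharacter C) (μ ν : CohVert 𝔠)
    (hfin : {C : ↥𝔠 | μ.val C ≠ ν.val C}.Finite)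
    (hne : {C : ↥𝔠 | μ.val C ≠ ν.val C}.Nonempty) :
    ∃ D : ↥𝔠, μ.val D ≠ ν.val D ∧ ∀ E : ↥𝔠, E ≠ D → ν.val E ≠ μ.val E →
      ((μ.val D)ᶜ ∩ (ν.val E)ᶜ).Nonempty := by
  by_contra hcon
  push_neg at hcon
  set S := {C : ↥𝔠 | μ.val C ≠ ν.val C} with hS
  have key : ∀ D : ↥S, ∃ E : ↥S, E.val ≠ D.val ∧ (μ.val D.val)ᶜ ⊆ ν.val E.val := by
    intro ⟨D, hD⟩
    obtain ⟨E, hE1, hE2, hE3⟩ := hcon D hD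
    refine ⟨⟨E, Ne.symm hE2⟩, hE1, ?_⟩
    intro x hx
    by_contra hx'
    have hmem : x ∈ (μ.val D)ᶜ ∩ (ν.val E)ᶜ := ⟨hx, hx'⟩
    rw [hE3] at hmem
    exact hmem
  choose f hf1 hf2 using key
  have : Finite ↥S := hfin
  obtain ⟨C₀, hC₀⟩ := hne
  set g : ℕ → ↥S := fun n => f^[n] ⟨C₀, hC₀⟩ with hg
  have hgs : ∀ n, g (n + 1) = f (g n) := fun n => Function.iterate_succ_apply' f n _
  have hdisj : ∀ D : ↥S, ν.val D.val ⊆ (μ.val D.val)ᶜ := by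
    intro D x hx hx'
    exact qc_disj h𝔠 D.val (ν.prop.1 D.val) (μ.prop.1 D.val) (Ne.symm D.prop) hx hx'
  have chain : ∀ n k, (μ.val (g n).val)ᶜ ⊆ ν.val (g (n + k + 1)).val := by
    intro n k
    induction k with
    | zero => rw [hgs n]; exact hf2 (g n)
    | succ k ih =>
        have h1 : (μ.val (g (n + k + 1)).val)ᶜ ⊆ ν.val (g (n + k + 2)).val := by
          have := hf2 (g (n + k + 1))
          rwa [← hgs (n + k + 1)] at this
        have : (μ.val (g n).val)ᶜ ⊆ ν.val (g (n + k + 2)).val :=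
          ih.trans ((hdisj _).trans h1)
        have hidx : n + (k + 1) + 1 = n + k + 2 := by omega
        rw [hidx]
        exact this
  obtain ⟨i, j, hij, hgij⟩ := Finite.exists_ne_map_eq_of_infinite g
  wlog hlt : i < j generalizing i j
  · exact this j i (Ne.symm hij) hgij.symm (by omega)
  -- case j = i + 1 impossible
  rcases Nat.lt_or_ge (i + 1) j with hj | hj
  · -- j ≥ i + 2
    have h1 : (μ.val (g i).val)ᶜ ⊆ ν.val (g (i + 1)).val := by
      have := chain i 0; simpa using this
    have h2 : (μ.val (g (i + 1)).val)ᶜ ⊆ ν.val (g i).val := by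
      have := chain (i + 1) (j - i - 2)
      have hidx : i + 1 + (j - i - 2) + 1 = j := by omega
      rw [hidx, ← hgij] at this
      exact this
    refine qc_two_cycle h𝔠 μ ν (g i).val (g (i + 1)).val (g i).prop (g (i + 1)).prop ?_ h1 h2
    intro h
    exact hf1 (g i) (by rw [← hgs i, ← h])
  · -- j = i + 1
    have hj' : j = i + 1 := by omega
    apply hf1 (g i)
    rw [← hgs i, ← hj', ← hgij]
end QCaux2


section QCaux3
variable {𝔠 : Set (Set (Set X))}

/-- disagreement set -/
def qcD (μ ν : CohVert 𝔠) : Set ↥𝔠 := {C : ↥𝔠 | μ.val C ≠ ν.val C}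

lemma qcD_self (μ : CohVert 𝔠) : qcD μ μ = ∅ := by
  ext C; simp [qcD]

lemma qcD_eq_empty {μ ν : CohVert 𝔠} (h : qcD μ ν = ∅) : μ = ν := by
  apply Subtype.ext; funext C
  by_contra hC
  exact absurd (h ▸ hC : (C : ↥𝔠) ∈ (∅ : Set ↥𝔠)) (Set.notMem_empty C)

lemma qc_length_ge : ∀ {μ ν : CohVert 𝔠} (w : (QCGraph 𝔠).Walk μ ν),
    (qcD μ ν).Finite ∧ (qcD μ ν).ncard ≤ w.length := by
  intro μ ν w
  induction w with
  | nil => rw [qcD_self]; exact ⟨Set.finite_empty, by simp⟩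
  | @cons μ σ ν h p ih =>
    obtain ⟨C₀, hC₀, hC₀u⟩ := id h
    have hsub : qcD μ ν ⊆ insert C₀ (qcD σ ν) := by
      intro C hC
      by_cases hσ : σ.val C = ν.val C
      · left
        exact hC₀u C (fun hh => hC (hh.trans hσ))
      · right; exact hσ
    have hfin : (qcD μ ν).Finite := (ih.1.insert C₀).subset hsub
    refine ⟨hfin, ?_⟩
    rw [SimpleGraph.Walk.length_cons]
    calc (qcD μ ν).ncard ≤ (insert C₀ (qcD σ ν)).ncard :=
          Set.ncard_le_ncard hsub (ih.1.insert C₀)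
      _ ≤ (qcD σ ν).ncard + 1 := Set.ncard_insert_le C₀ _
      _ ≤ p.length + 1 := by omega

lemma qc_walk (h𝔠 : ∀ C ∈ 𝔠, IsCharacter C) :
    ∀ (n : ℕ) (μ ν : CohVert 𝔠), (qcD μ ν).Finite → (qcD μ ν).ncard = n →
      ∃ w : (QCGraph 𝔠).Walk μ ν, w.length = n := by
  intro n
  induction n with
  | zero =>
    intro μ ν hfin hn
    have : μ = ν := qcD_eq_empty ((Set.ncard_eq_zero hfin).mp hn)
    subst this
    exact ⟨.nil, rfl⟩
  | succ n ih =>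
    intro μ ν hfin hn
    have hne : (qcD μ ν).Nonempty := by
      rw [Set.nonempty_iff_ne_empty]
      intro h
      rw [h] at hn; simp at hn
    obtain ⟨D, hD, hblock⟩ := qc_exists_unblocked h𝔠 μ ν hfin hne
    have hcoh : CoherentSel 𝔠 (qcFlip μ.val D (ν.val D)) :=
      qc_coherent_flip μ ν D hD hblock
    set μ' : CohVert 𝔠 := ⟨qcFlip μ.val D (ν.val D), hcoh⟩ with hμ'
    have hadj : (QCGraph 𝔠).Adj μ μ' := by
      refine ⟨D, ?_, ?_⟩
      · rw [hμ']; simp only [qcFlip_same]; exact hD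
      · intro E hE
        by_contra hED
        apply hE
        rw [hμ']; simp only [qcFlip_ne _ _ _ hED]
    have hqcD : qcD μ' ν = qcD μ ν \ {D} := by
      ext E
      by_cases hE : E = D
      · subst hE
        simp [qcD, hμ', qcFlip_same]
      · simp [qcD, hμ', qcFlip_ne _ _ _ hE, hE]
    have hfin' : (qcD μ' ν).Finite := by rw [hqcD]; exact hfin.diff
    have hn' : (qcD μ' ν).ncard = n := by
      rw [hqcD]
      have := Set.ncard_diff_singleton_add_one (show D ∈ qcD μ ν from hD) hfin
      omega
    obtain ⟨p, hp⟩ := ih μ' ν hfin' hn'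
    exact ⟨.cons hadj p, by simp [hp]⟩

lemma qc_reach_iff (h𝔠 : ∀ C ∈ 𝔠, IsCharacter C) (μ ν : CohVert 𝔠) :
    (QCGraph 𝔠).Reachable μ ν ↔ (qcD μ ν).Finite := by
  constructor
  · intro h
    obtain ⟨w⟩ := h
    exact (qc_length_ge w).1
  · intro hfin
    obtain ⟨w, -⟩ := qc_walk h𝔠 (qcD μ ν).ncard μ ν hfin rfl
    exact ⟨w⟩

lemma qc_dist (h𝔠 : ∀ C ∈ 𝔠, IsCharacter C) (μ ν : CohVert 𝔠)
    (h : (QCGraph 𝔠).Reachable μ ν) : (QCGraph 𝔠).dist μ ν = (qcD μ ν).ncard := by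
  have hfin := (qc_reach_iff h𝔠 μ ν).mp h
  apply le_antisymm
  · obtain ⟨w, hw⟩ := qc_walk h𝔠 (qcD μ ν).ncard μ ν hfin rfl
    exact hw ▸ SimpleGraph.dist_le w
  · obtain ⟨p, hp⟩ := h.exists_walk_length_eq_dist
    exact hp ▸ (qc_length_ge p).2

end QCaux3


section QCaux4

lemma qc_lift_walk {V : Type*} {G : SimpleGraph V} {S : Set V}
    (hS : ∀ a b : V, G.Adj a b → a ∈ S → b ∈ S) :
    ∀ {a b : V} (w : G.Walk a b) (ha : a ∈ S) (hb : b ∈ S),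
      ∃ w' : (G.induce S).Walk ⟨a, ha⟩ ⟨b, hb⟩, w'.length = w.length := by
  intro a b w
  induction w with
  | nil => intro ha hb; exact ⟨.nil, rfl⟩
  | @cons a c b h p ih =>
    intro ha hb
    obtain ⟨w', hw'⟩ := ih (hS _ _ h ha) hb
    refine ⟨.cons (by simpa using h) w', by simp [hw']⟩

def qcIncl {V : Type*} (G : SimpleGraph V) (S : Set V) : G.induce S →g G :=
  ⟨Subtype.val, fun h => by simpa using h⟩

variable {𝔠 : Set (Set (Set X))}

lemma qc_comp_closed (μ : CohVert 𝔠) :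
    ∀ a b : CohVert 𝔠, (QCGraph 𝔠).Adj a b → a ∈ {ν | (QCGraph 𝔠).Reachable μ ν} →
      b ∈ {ν | (QCGraph 𝔠).Reachable μ ν} :=
  fun _ _ hadj ha => ha.trans hadj.reachable

lemma qc_idist (h𝔠 : ∀ C ∈ 𝔠, IsCharacter C) (μ : CohVert 𝔠)
    (x y : {ν | (QCGraph 𝔠).Reachable μ ν}) :
    ((QCGraph 𝔠).induce {ν | (QCGraph 𝔠).Reachable μ ν}).dist x y
      = (qcD x.val y.val).ncard := by
  have hreach : (QCGraph 𝔠).Reachable x.val y.val := x.prop.symm.trans y.prop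
  have hfin : (qcD x.val y.val).Finite := (qc_reach_iff h𝔠 _ _).mp hreach
  apply le_antisymm
  · obtain ⟨w, hw⟩ := qc_walk h𝔠 (qcD x.val y.val).ncard x.val y.val hfin rfl
    obtain ⟨w', hw'⟩ := qc_lift_walk (qc_comp_closed μ) w x.prop y.prop
    calc _ ≤ w'.length := SimpleGraph.dist_le w'
      _ = _ := by rw [hw', hw]
  · have hreach' : ((QCGraph 𝔠).induce {ν | (QCGraph 𝔠).Reachable μ ν}).Reachable x y := by
      obtain ⟨w, -⟩ := qc_walk h𝔠 (qcD x.val y.val).ncard x.val y.val hfin rfl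
      obtain ⟨w', -⟩ := qc_lift_walk (qc_comp_closed μ) w x.prop y.prop
      exact ⟨w'⟩
    obtain ⟨p, hp⟩ := hreach'.exists_walk_length_eq_dist
    have := (qc_length_ge (p.map (qcIncl (QCGraph 𝔠) _))).2
    rwa [SimpleGraph.Walk.length_map, hp] at this

/-- membership parity from equal cardinalities -/
lemma qc_mem_iff {α : Type*} {A B : Set α} {C : α} (h : A \ {C} = B \ {C})
    (hA : A.Finite) (hB : B.Finite) (hcard : A.ncard = B.ncard) : C ∈ A ↔ C ∈ B := by
  have hAB : ∀ x, x ≠ C → (x ∈ A ↔ x ∈ B) := by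
    intro x hx
    constructor
    · intro hxA
      have : x ∈ B \ {C} := h ▸ (⟨hxA, hx⟩ : x ∈ A \ {C})
      exact this.1
    · intro hxB
      have : x ∈ A \ {C} := h ▸ (⟨hxB, hx⟩ : x ∈ B \ {C})
      exact this.1
  constructor
  · intro hCA
    by_contra hCB
    have : A = insert C B := by
      ext x
      by_cases hx : x = C
      · subst hx; simp [hCA]
      · simp only [Set.mem_insert_iff, hx, false_or]; exact hAB x hx
    rw [this, Set.ncard_insert_of_notMem hCB hB] at hcard
    omega
  · intro hCB
    by_contra hCA
    have : B = insert C A := by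
      ext x
      by_cases hx : x = C
      · subst hx; simp [hCB]
      · simp only [Set.mem_insert_iff, hx, false_or]; exact (hAB x hx).symm
    rw [this, Set.ncard_insert_of_notMem hCA hA] at hcard
    omega

lemma qc_step {α : Type*} {A B : Set α} {C : α} (h : A \ {C} = B \ {C})
    (hA : A.Finite) (hB : B.Finite) (hcard : A.ncard = B.ncard + 1) : C ∈ A ∧ C ∉ B := by
  have hAB : ∀ x, x ≠ C → (x ∈ A ↔ x ∈ B) := by
    intro x hx
    have h1 : x ∈ A \ {C} ↔ x ∈ B \ {C} := by rw [h]
    simp only [Set.mem_diff, Set.mem_singleton_iff] at h1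
    constructor
    · intro hxA; exact (h1.mp ⟨hxA, hx⟩).1
    · intro hxB; exact (h1.mpr ⟨hxB, hx⟩).1
  by_cases hCA : C ∈ A <;> by_cases hCB : C ∈ B
  · exfalso
    have : A = B := by
      ext x
      by_cases hx : x = C
      · subst hx; simp [hCA, hCB]
      · exact hAB x hx
    rw [this] at hcard; omega
  · exact ⟨hCA, hCB⟩
  · exfalso
    have : B = insert C A := by
      ext x
      by_cases hx : x = C
      · subst hx; simp [hCB]
      · simp only [Set.mem_insert_iff, hx, false_or]; exact (hAB x hx).symm
    rw [this, Set.ncard_insert_of_notMem hCA hA] at hcard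
    omega
  · exfalso
    have : A = B := by
      ext x
      by_cases hx : x = C
      · subst hx; simp [hCA, hCB]
      · exact hAB x hx
    rw [this] at hcard; omega

end QCaux4


section QCaux5
variable {𝔠 : Set (Set (Set X))}

lemma qc_adj_of (a b : CohVert 𝔠) (D : ↥𝔠) (h1 : a.val D ≠ b.val D)
    (h2 : ∀ E, E ≠ D → a.val E = b.val E) : (QCGraph 𝔠).Adj a b :=
  ⟨D, h1, fun E hE => by_contra fun h => hE (h2 E h)⟩

lemma qc_k4_aux (a b c : CohVert 𝔠) {C : ↥𝔠} (hC : a.val C ≠ b.val C)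
    (hCu : ∀ E, a.val E ≠ b.val E → E = C)
    (hac : (QCGraph 𝔠).Adj a c) (hbc : (QCGraph 𝔠).Adj b c) :
    ∀ E, E ≠ C → c.val E = a.val E := by
  obtain ⟨C₁, hC₁, hC₁u⟩ := hac
  obtain ⟨C₂, hC₂, hC₂u⟩ := hbc
  have ha1 : ∀ E, E ≠ C₁ → a.val E = c.val E := fun E hE => by_contra fun h => hE (hC₁u E h)
  have hb2 : ∀ E, E ≠ C₂ → b.val E = c.val E := fun E hE => by_contra fun h => hE (hC₂u E h)
  have hC₁C : C₁ = C := by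
    by_contra h
    have hab : a.val C₁ = b.val C₁ := by_contra fun h' => h (hCu C₁ h')
    have h12 : C₁ = C₂ := hC₂u C₁ (show b.val C₁ ≠ c.val C₁ by rw [← hab]; exact hC₁)
    apply hC
    rw [ha1 C (Ne.symm h), hb2 C (by rw [← h12]; exact Ne.symm h)]
  intro E hE
  exact (ha1 E (by rw [hC₁C]; exact hE)).symm

lemma qc_k23_aux (a b v : CohVert 𝔠) (hne : a ≠ b) (hnab : ¬ (QCGraph 𝔠).Adj a b)
    (hav : (QCGraph 𝔠).Adj a v) (hbv : (QCGraph 𝔠).Adj b v) :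
    ∃ P Q : ↥𝔠, P ≠ Q ∧ a.val P ≠ b.val P ∧ a.val Q ≠ b.val Q ∧
      (∀ E : ↥𝔠, a.val E ≠ b.val E → E = P ∨ E = Q) ∧
      (∀ E : ↥𝔠, E ≠ P → v.val E = a.val E) ∧ v.val P = b.val P := by
  obtain ⟨P, hP, hPu⟩ := hav
  obtain ⟨Q, hQ, hQu⟩ := hbv
  have haP : ∀ E, E ≠ P → a.val E = v.val E := fun E hE => by_contra fun h => hE (hPu E h)
  have hbQ : ∀ E, E ≠ Q → b.val E = v.val E := fun E hE => by_contra fun h => hE (hQu E h)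
  have hPQ : P ≠ Q := by
    intro h; subst h
    apply hnab
    obtain ⟨E₀, hE₀⟩ := Function.ne_iff.mp (fun hval => hne (Subtype.ext hval))
    have hsub : ∀ E, a.val E ≠ b.val E → E = P := by
      intro E hE
      by_contra hEP
      rw [haP E hEP, ← hbQ E hEP] at hE
      exact hE rfl
    exact ⟨E₀, hE₀, fun E h => (hsub E h).trans (hsub E₀ hE₀).symm⟩
  have hvP : v.val P = b.val P := (hbQ P hPQ).symm
  have haPb : a.val P ≠ b.val P := by rw [← hvP]; exact hP
  have haQb : a.val Q ≠ b.val Q := by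
    rw [haP Q (Ne.symm hPQ)]
    exact fun h => hQ h.symm
  refine ⟨P, Q, hPQ, haPb, haQb, ?_, fun E hE => (haP E hE).symm, hvP⟩
  intro E hE
  by_contra hEPQ
  push_neg at hEPQ
  rw [haP E hEPQ.1, ← hbQ E hEPQ.2] at hE
  exact hE rfl

set_option maxHeartbeats 1000000 in
lemma qc_quasimedian (h𝔠 : ∀ C ∈ 𝔠, IsCharacter C) (μ : CohVert 𝔠) :
    QuasiMedian ((QCGraph 𝔠).induce {ν | (QCGraph 𝔠).Reachable μ ν}) := by
  have hfin : ∀ u v : ↥{ν | (QCGraph 𝔠).Reachable μ ν}, (qcD u.val v.val).Finite :=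
    fun u v => (qc_reach_iff h𝔠 u.val v.val).mp (u.prop.symm.trans v.prop)
  refine ⟨?_, ?_, ?_, ?_, ?_⟩
  -- Connected
  · rw [SimpleGraph.connected_iff]
    constructor
    · intro u v
      obtain ⟨w⟩ := (u.prop.symm.trans v.prop : (QCGraph 𝔠).Reachable u.val v.val)
      obtain ⟨w', -⟩ := qc_lift_walk (qc_comp_closed μ) w u.prop v.prop
      exact ⟨w'⟩
    · exact ⟨⟨μ, SimpleGraph.Reachable.refl μ⟩⟩
  -- Triangle condition
  · intro o x y hxy hdist
    have hxy' : ∃! C : ↥𝔠, x.val.val C ≠ y.val.val C := hxy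
    obtain ⟨C, hC, hCu⟩ := hxy'
    have heq : ∀ E : ↥𝔠, E ≠ C → x.val.val E = y.val.val E :=
      fun E hE => by_contra fun h => hE (hCu E h)
    rw [qc_idist h𝔠 μ o x, qc_idist h𝔠 μ o y] at hdist
    have hdiffeq : qcD o.val x.val \ {C} = qcD o.val y.val \ {C} := by
      ext E
      simp only [Set.mem_diff, Set.mem_singleton_iff, qcD, Set.mem_setOf_eq]
      constructor
      · rintro ⟨h1, h2⟩; exact ⟨by rw [← heq E h2]; exact h1, h2⟩
      · rintro ⟨h1, h2⟩; exact ⟨by rw [heq E h2]; exact h1, h2⟩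
    have hmem := qc_mem_iff hdiffeq (hfin o x) (hfin o y) hdist
    have hCx : C ∈ qcD o.val x.val := by
      by_contra hc
      have hcy : C ∉ qcD o.val y.val := fun h => hc (hmem.mpr h)
      simp only [qcD, Set.mem_setOf_eq, not_not] at hc hcy
      exact hC (by rw [← hc, hcy])
    have hCy : C ∈ qcD o.val y.val := hmem.mp hCx
    have hCx' : o.val.val C ≠ x.val.val C := hCx
    have hCy' : o.val.val C ≠ y.val.val C := hCy
    have hcoh := qc_coherent_flip₃ x.val y.val o.val C (Ne.symm hCx') hC
      (fun E hE h => by rw [← heq E hE]; exact h)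
    set w0 : CohVert 𝔠 := ⟨qcFlip x.val.val C (o.val.val C), hcoh⟩ with hw0
    have hw0C : w0.val C = o.val.val C := qcFlip_same _ _ _
    have hw0E : ∀ E, E ≠ C → w0.val E = x.val.val E := fun E hE => qcFlip_ne _ _ _ hE
    have hadjwx : (QCGraph 𝔠).Adj w0 x.val :=
      qc_adj_of _ _ C (by rw [hw0C]; exact hCx') hw0E
    have hadjwy : (QCGraph 𝔠).Adj w0 y.val :=
      qc_adj_of _ _ C (by rw [hw0C]; exact hCy')
        (fun E hE => by rw [hw0E E hE]; exact heq E hE)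
    have hwS : w0 ∈ {ν | (QCGraph 𝔠).Reachable μ ν} := x.prop.trans hadjwx.symm.reachable
    refine ⟨⟨w0, hwS⟩, hadjwx, hadjwy, ?_⟩
    have hqcd : qcD o.val w0 = qcD o.val x.val \ {C} := by
      ext E
      constructor
      · intro hE
        have hE' : o.val.val E ≠ w0.val E := hE
        by_cases h : E = C
        · subst h; rw [hw0C] at hE'; exact absurd rfl hE'
        · exact ⟨show o.val.val E ≠ x.val.val E by rw [← hw0E E h]; exact hE', h⟩
      · rintro ⟨hE, h⟩
        have h' : E ≠ C := h
        show o.val.val E ≠ w0.val E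
        rw [hw0E E h']; exact hE
    rw [qc_idist h𝔠 μ, qc_idist h𝔠 μ]
    show (qcD o.val w0).ncard + 1 = (qcD o.val x.val).ncard
    rw [hqcd]
    exact Set.ncard_diff_singleton_add_one (show C ∈ qcD o.val x.val from hCx) (hfin o x)
  -- Quadrangle condition
  · intro o x y z hzx hzy hxy2 h1 h2
    have hzx' : ∃! C : ↥𝔠, z.val.val C ≠ x.val.val C := hzx
    have hzy' : ∃! C : ↥𝔠, z.val.val C ≠ y.val.val C := hzy
    obtain ⟨C, hC, hCu⟩ := hzx'
    obtain ⟨D, hD, hDu⟩ := hzy'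
    have hzxE : ∀ E, E ≠ C → z.val.val E = x.val.val E :=
      fun E hE => by_contra fun h => hE (hCu E h)
    have hzyE : ∀ E, E ≠ D → z.val.val E = y.val.val E :=
      fun E hE => by_contra fun h => hE (hDu E h)
    rw [qc_idist h𝔠 μ x y] at hxy2
    rw [qc_idist h𝔠 μ o z, qc_idist h𝔠 μ o x] at h1
    rw [qc_idist h𝔠 μ o z, qc_idist h𝔠 μ o y] at h2
    have hCD : C ≠ D := by
      intro h; subst h
      have hsub : qcD x.val y.val ⊆ {C} := by
        intro E hE
        have hE' : x.val.val E ≠ y.val.val E := hE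
        by_contra hEC
        simp only [Set.mem_singleton_iff] at hEC
        exact hE' (by rw [← hzxE E hEC, hzyE E hEC])
      have hle := Set.ncard_le_ncard hsub (Set.finite_singleton C)
      rw [Set.ncard_singleton] at hle
      omega
    have hxyC : x.val.val C ≠ y.val.val C := by
      rw [← hzyE C hCD]; exact fun h => hC h.symm
    have hdzx : qcD o.val z.val \ {C} = qcD o.val x.val \ {C} := by
      ext E
      simp only [Set.mem_diff, Set.mem_singleton_iff, qcD, Set.mem_setOf_eq]
      constructor
      · rintro ⟨hh, h2'⟩; exact ⟨by rw [← hzxE E h2']; exact hh, h2'⟩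
      · rintro ⟨hh, h2'⟩; exact ⟨by rw [hzxE E h2']; exact hh, h2'⟩
    obtain ⟨hCz, hCx⟩ := qc_step hdzx (hfin o z) (hfin o x) h1
    have hdzy : qcD o.val z.val \ {D} = qcD o.val y.val \ {D} := by
      ext E
      simp only [Set.mem_diff, Set.mem_singleton_iff, qcD, Set.mem_setOf_eq]
      constructor
      · rintro ⟨hh, h2'⟩; exact ⟨by rw [← hzyE E h2']; exact hh, h2'⟩
      · rintro ⟨hh, h2'⟩; exact ⟨by rw [hzyE E h2']; exact hh, h2'⟩
    obtain ⟨hDz, hDy⟩ := qc_step hdzy (hfin o z) (hfin o y) h2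
    simp only [qcD, Set.mem_setOf_eq, not_not] at hCx hDy
    have hCz' : o.val.val C ≠ z.val.val C := hCz
    have hDz' : o.val.val D ≠ z.val.val D := hDz
    have hxD : x.val.val D ≠ o.val.val D := by
      rw [← hzxE D (Ne.symm hCD)]; exact fun h => hDz' h.symm
    have hxyD : x.val.val D ≠ y.val.val D := by
      rw [← hzxE D (Ne.symm hCD), ← hDy]; exact fun h => hDz' h.symm
    have hcoh := qc_coherent_flip₃ x.val y.val o.val D hxD hxyD (fun E hE h => by
      by_cases hEC : E = C
      · subst hEC; exact absurd hCx h
      · have hxyE : x.val.val E = y.val.val E := by rw [← hzxE E hEC, hzyE E hE]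
        rw [← hxyE]; exact h)
    set w0 : CohVert 𝔠 := ⟨qcFlip x.val.val D (o.val.val D), hcoh⟩ with hw0
    have hw0D : w0.val D = o.val.val D := qcFlip_same _ _ _
    have hw0E : ∀ E, E ≠ D → w0.val E = x.val.val E := fun E hE => qcFlip_ne _ _ _ hE
    have hadjwx : (QCGraph 𝔠).Adj w0 x.val :=
      qc_adj_of _ _ D (by rw [hw0D]; exact fun h => hxD h.symm) hw0E
    have hadjwy : (QCGraph 𝔠).Adj w0 y.val := by
      refine qc_adj_of _ _ C ?_ ?_
      · rw [hw0E C hCD]; exact hxyC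
      · intro E hE
        by_cases hED : E = D
        · subst hED; rw [hw0D, hDy]
        · rw [hw0E E hED, ← hzxE E hE, hzyE E hED]
    have hwS : w0 ∈ {ν | (QCGraph 𝔠).Reachable μ ν} := x.prop.trans hadjwx.symm.reachable
    refine ⟨⟨w0, hwS⟩, hadjwx, hadjwy, ?_⟩
    have hqcd : qcD o.val w0 = qcD o.val x.val \ {D} := by
      ext E
      constructor
      · intro hE
        have hE' : o.val.val E ≠ w0.val E := hE
        by_cases h : E = D
        · subst h; rw [hw0D] at hE'; exact absurd rfl hE'
        · exact ⟨show o.val.val E ≠ x.val.val E by rw [← hw0E E h]; exact hE', h⟩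
      · rintro ⟨hE, h⟩
        have h' : E ≠ D := h
        show o.val.val E ≠ w0.val E
        rw [hw0E E h']; exact hE
    have hDx : D ∈ qcD o.val x.val := by
      show o.val.val D ≠ x.val.val D
      rw [← hzxE D (Ne.symm hCD), hDy]
      exact fun h => hD h.symm
    rw [qc_idist h𝔠 μ, qc_idist h𝔠 μ]
    show (qcD o.val w0).ncard + 2 = (qcD o.val z.val).ncard
    rw [hqcd]
    have := Set.ncard_diff_singleton_add_one hDx (hfin o x)
    omega
  -- no induced K23
  · rintro ⟨a, b, x, y, z, hab, hxy, hyz, hxz, hax, hay, haz, hbx, hby, hbz, hnab, -, -, -⟩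
    have hab' : a.val ≠ b.val := fun h => hab (Subtype.ext h)
    have hnab' : ¬ (QCGraph 𝔠).Adj a.val b.val := fun h => hnab h
    obtain ⟨Px, Qx, hPQx, hPx, hQx, hTx, hxdet, hxP⟩ :=
      qc_k23_aux a.val b.val x.val hab' hnab' hax hbx
    obtain ⟨Py, Qy, hPQy, hPy, hQy, hTy, hydet, hyP⟩ :=
      qc_k23_aux a.val b.val y.val hab' hnab' hay hby
    obtain ⟨Pz, Qz, hPQz, hPz, hQz, hTz, hzdet, hzP⟩ :=
      qc_k23_aux a.val b.val z.val hab' hnab' haz hbz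
    have key : ∀ (u v : CohVert 𝔠) (P : ↥𝔠),
        (∀ E, E ≠ P → u.val E = a.val.val E) → u.val P = b.val.val P →
        (∀ E, E ≠ P → v.val E = a.val.val E) → v.val P = b.val.val P → u = v := by
      intro u v P hu1 hu2 hv1 hv2
      apply Subtype.ext; funext E
      by_cases hE : E = P
      · subst hE; rw [hu2, hv2]
      · rw [hu1 E hE, hv1 E hE]
    have hPyx : Py = Px ∨ Py = Qx := hTx Py hPy
    have hPzx : Pz = Px ∨ Pz = Qx := hTx Pz hPz
    rcases hPyx with h | h
    · exact hxy (Subtype.ext ((key y.val x.val Px (h ▸ hydet) (h ▸ hyP) hxdet hxP)).symm)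
    · rcases hPzx with h' | h'
      · exact hxz (Subtype.ext ((key z.val x.val Px (h' ▸ hzdet) (h' ▸ hzP) hxdet hxP)).symm)
      · exact hyz (Subtype.ext ((key y.val z.val Qx (h ▸ hydet) (h ▸ hyP)
          (h' ▸ hzdet) (h' ▸ hzP))))
  -- no induced K4 minus
  · rintro ⟨a, b, c, d, hab, hac, had, hbc, hbd, hcd_ne, hcd⟩
    have hab' : ∃! C : ↥𝔠, a.val.val C ≠ b.val.val C := hab
    obtain ⟨C, hC, hCu⟩ := hab'
    have hCu' : ∀ E, a.val.val E ≠ b.val.val E → E = C := fun E hE => hCu E hE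
    have hcA := qc_k4_aux a.val b.val c.val hC hCu' hac hbc
    have hdA := qc_k4_aux a.val b.val d.val hC hCu' had hbd
    have hcd' : c.val.val ≠ d.val.val :=
      fun h => hcd_ne (Subtype.ext (Subtype.ext h))
    obtain ⟨E₀, hE₀⟩ := Function.ne_iff.mp hcd'
    have hE₀C : E₀ = C := by
      by_contra h
      rw [hcA E₀ h, ← hdA E₀ h] at hE₀
      exact hE₀ rfl
    subst hE₀C
    apply hcd
    show (QCGraph 𝔠).Adj c.val d.val
    refine qc_adj_of _ _ E₀ hE₀ ?_
    intro E hE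
    rw [hcA E hE, hdA E hE]

end QCaux5


/-- Every connected component of the quasi-cubulation of a space with characters is
a quasi-median graph, and the distance between coherent selectors is the number of
characters on which they disagree; in particular two coherent selectors lie in the
same component iff they disagree on only finitely many characters. -/
theorem stmt18 (𝔠 : Set (Set (Set X))) (h𝔠 : ∀ C ∈ 𝔠, IsCharacter C) :
    (∀ μ ν : CohVert 𝔠, (QCGraph 𝔠).Reachable μ ν ↔
        {C : ↥𝔠 | μ.val C ≠ ν.val C}.Finite) ∧
      (∀ μ ν : CohVert 𝔠, (QCGraph 𝔠).Reachable μ ν →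
        (QCGraph 𝔠).dist μ ν = {C : ↥𝔠 | μ.val C ≠ ν.val C}.ncard) ∧
      (∀ μ : CohVert 𝔠,
        QuasiMedian ((QCGraph 𝔠).induce {ν | (QCGraph 𝔠).Reachable μ ν})) := by
  exact ⟨fun μ ν => qc_reach_iff h𝔠 μ ν, fun μ ν h => qc_dist h𝔠 μ ν h,
    fun μ => qc_quasimedian h𝔠 μ⟩
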